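/- Let X be a separable Banach space, (M,d) a separable complete metric space, and p,q ∈ [1,+∞). If M Hölder(p/q) embeds into ℓ_q(X), then E(M,p) is Borel reducible to E(X,q). -/

import Mathlib

open Filter Topology MeasureTheory
open scoped ENNReal NNReal

noncomputable section

/-- `E` is Borel reducible to `F`: there is a Borel (measurable) map `θ` such that
`E x y ↔ F (θ x) (θ y)` for all `x, y`. -/
def BorelReducible {α β : Type*} [MeasurableSpace α] [MeasurableSpace β]
    (E : α → α → Prop) (F : β → β → Prop) : Prop :=
  ∃ θ : α → β, Measurable θ ∧ ∀ x y, E x y ↔ F (θ x) (θ y)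

theorem EMp_reducible_EXq_of_holderEmb {X : Type*} [NormedAddCommGroup X] [NormedSpace ℝ X]
    [CompleteSpace X] [TopologicalSpace.SeparableSpace X] [MeasurableSpace X] [BorelSpace X]
    (M : Type*) [MetricSpace M] [TopologicalSpace.SeparableSpace M] [CompleteSpace M]
    [MeasurableSpace M] [BorelSpace M]
    (p q : ℝ) (hp : 1 ≤ p) (hq : 1 ≤ q)
    (hemb : ∃ (T : M → lp (fun _ : ℕ => X) (ENNReal.ofReal q)) (A : ℝ), 0 < A ∧
      ∀ u v : M, (1/A) * dist u v ^ (p/q) ≤ ‖T u - T v‖ ∧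
        ‖T u - T v‖ ≤ A * dist u v ^ (p/q)) :
    BorelReducible
      (fun x y : ℕ → M => Summable fun n => dist (x n) (y n) ^ p)
      (fun x y : ℕ → X => Summable fun n => ‖x n - y n‖ ^ q) := by
  classical
  obtain ⟨T, A, hA, hT⟩ := hemb
  have hp0 : (0:ℝ) < p := lt_of_lt_of_le one_pos hp
  have hq0 : (0:ℝ) < q := lt_of_lt_of_le one_pos hq
  have hpq0 : (0:ℝ) < p / q := div_pos hp0 hq0
  have htr : (ENNReal.ofReal q).toReal = q := ENNReal.toReal_ofReal hq0.le
  have hqne : ENNReal.ofReal q ≠ 0 := by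
    simp only [ne_eq, ENNReal.ofReal_eq_zero, not_le]
    exact hq0
  haveI : Fact (1 ≤ ENNReal.ofReal q) := ⟨by
    rw [show (1:ℝ≥0∞) = ENNReal.ofReal 1 by simp]
    exact ENNReal.ofReal_le_ofReal hq⟩
  -- T is continuous
  have hTcont : Continuous T := by
    rw [Metric.continuous_iff]
    intro b ε hε
    refine ⟨(ε / (2 * A)) ^ (q / p), Real.rpow_pos_of_pos (by positivity) _, fun a hab => ?_⟩
    have h1 : dist (T a) (T b) ≤ A * dist a b ^ (p / q) := by
      rw [dist_eq_norm]; exact (hT a b).2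
    have h2 : dist a b ^ (p / q) < ((ε / (2 * A)) ^ (q / p)) ^ (p / q) :=
      Real.rpow_lt_rpow dist_nonneg hab hpq0
    have h3 : ((ε / (2 * A)) ^ (q / p)) ^ (p / q) = ε / (2 * A) := by
      rw [← Real.rpow_mul (by positivity)]
      rw [show q / p * (p / q) = 1 by field_simp]
      exact Real.rpow_one _
    rw [h3] at h2
    have : dist (T a) (T b) < A * (ε / (2 * A)) :=
      h1.trans_lt (by exact mul_lt_mul_of_pos_left h2 hA)
    have hAe : A * (ε / (2 * A)) = ε / 2 := by field_simp
    rw [hAe] at this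
    linarith
  -- coordinate evaluation is continuous
  have heval : ∀ k : ℕ,
      Continuous fun f : lp (fun _ : ℕ => X) (ENNReal.ofReal q) => f k := by
    intro k
    refine (LipschitzWith.of_dist_le_mul (K := 1) fun f g => ?_).continuous
    have h1 : ‖(f - g : lp (fun _ : ℕ => X) (ENNReal.ofReal q)) k‖ ≤ ‖f - g‖ :=
      lp.norm_apply_le_norm hqne (f - g) k
    rw [lp.coeFn_sub] at h1
    simpa [dist_eq_norm] using h1
  -- the pairing equivalence
  set e : ℕ ≃ ℕ × ℕ := (Denumerable.eqv (ℕ × ℕ)).symm with he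
  refine ⟨fun x m => T (x (e m).1) ((e m).2), ?_, ?_⟩
  · refine measurable_pi_lambda _ fun m => ?_
    exact (((heval (e m).2).comp hTcont).measurable).comp (measurable_pi_apply _)
  · intro x y
    -- rewrite value differences
    have hcoord : ∀ n k, T (x n) k - T (y n) k = (T (x n) - T (y n)) k := by
      intro n k; rw [lp.coeFn_sub]; rfl
    -- key norm identity
    have hnorm : ∀ n, HasSum (fun k => ‖(T (x n) - T (y n)) k‖ ^ q)
        (‖T (x n) - T (y n)‖ ^ q) := by
      intro n
      have := lp.hasSum_norm (p := ENNReal.ofReal q) (by rw [htr]; exact hq0)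
        (T (x n) - T (y n))
      rwa [htr] at this
    set F : ℕ × ℕ → ℝ := fun nk => ‖(T (x (nk.1)) - T (y (nk.1))) nk.2‖ ^ q with hF
    have hFnn : 0 ≤ F := fun nk => Real.rpow_nonneg (norm_nonneg _) _
    have step1 : (Summable fun m => ‖T (x (e m).1) ((e m).2) - T (y (e m).1) ((e m).2)‖ ^ q)
        ↔ Summable F := by
      rw [← e.summable_iff]
      apply summable_congr
      intro m
      rw [hcoord]
      rfl
    have step2 : Summable F ↔ Summable fun n => ‖T (x n) - T (y n)‖ ^ q := by
      rw [summable_prod_of_nonneg hFnn]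
      constructor
      · rintro ⟨-, h2⟩
        refine h2.congr fun n => ?_
        exact (hnorm n).tsum_eq
      · intro h
        refine ⟨fun n => (hnorm n).summable, h.congr fun n => ((hnorm n).tsum_eq).symm⟩
    -- comparison
    have hpow : ∀ u v : M, (dist u v ^ (p / q)) ^ q = dist u v ^ p := by
      intro u v
      rw [← Real.rpow_mul dist_nonneg, div_mul_cancel₀ _ hq0.ne']
    have step3 : (Summable fun n => dist (x n) (y n) ^ p)
        ↔ Summable fun n => ‖T (x n) - T (y n)‖ ^ q := by
      constructor
      · intro h
        refine Summable.of_nonneg_of_le (fun n => by positivity)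
          (fun n => ?_) (h.mul_left (A ^ q))
        have h1 : ‖T (x n) - T (y n)‖ ^ q ≤ (A * dist (x n) (y n) ^ (p / q)) ^ q :=
          Real.rpow_le_rpow (norm_nonneg _) (hT (x n) (y n)).2 hq0.le
        rwa [Real.mul_rpow hA.le (Real.rpow_nonneg dist_nonneg _), hpow] at h1
      · intro h
        refine Summable.of_nonneg_of_le (fun n => Real.rpow_nonneg dist_nonneg _)
          (fun n => ?_) (h.mul_left (A ^ q))
        have h0 : dist (x n) (y n) ^ (p / q) ≤ A * ‖T (x n) - T (y n)‖ := by
          have := (hT (x n) (y n)).1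
          rw [div_mul_eq_mul_div, div_le_iff₀ hA] at this
          linarith [this]
        have h1 : (dist (x n) (y n) ^ (p / q)) ^ q ≤ (A * ‖T (x n) - T (y n)‖) ^ q :=
          Real.rpow_le_rpow (Real.rpow_nonneg dist_nonneg _) h0 hq0.le
        rwa [hpow, Real.mul_rpow hA.le (norm_nonneg _)] at h1
    exact step3.trans (step2.symm.trans step1.symm)
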